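/- Let λ > 0 and write I_k for I_k(2λ), the modified Bessel function of the first kind of integer order k evaluated at 2λ. Then for every positive integer m, | Σ_{n odd, 1 ≤ n ≤ m−1} ( I_{m+1}/I_{n+2} − I_m/I_{n−1} ) | ≤ 3. -/

import Mathlib

open MeasureTheory ProbabilityTheory Real

/-- The Skellam distribution: law of `X - Y` for `X, Y` independent Poisson random
variables with rates `l1` and `l2`. -/
noncomputable def skellamMeasure (l1 l2 : ℝ) : Measure ℤ :=
  ((poissonMeasure l1.toNNReal).prod (poissonMeasure l2.toNNReal)).map
    (fun p => (p.1 : ℤ) - (p.2 : ℤ))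

/-- Kolmogorov–Smirnov distance between two real random variables on `Ω`. -/
noncomputable def dKS {Ω : Type*} [MeasurableSpace Ω] (μ : Measure Ω) (X Z : Ω → ℝ) : ℝ :=
  ⨆ x : ℝ, |(μ {ω | X ω ≤ x}).toReal - (μ {ω | Z ω ≤ x}).toReal|

/-- Kolmogorov–Smirnov distance between two distributions on `ℤ`. -/
noncomputable def dKSZ (μ1 μ2 : Measure ℤ) : ℝ :=
  ⨆ x : ℝ, |(μ1 {k : ℤ | (k : ℝ) ≤ x}).toReal - (μ2 {k : ℤ | (k : ℝ) ≤ x}).toReal|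

/-- Kolmogorov–Smirnov distance between two distributions on `ℝ`. -/
noncomputable def dKSR (μ1 μ2 : Measure ℝ) : ℝ :=
  ⨆ x : ℝ, |(μ1 {y : ℝ | y ≤ x}).toReal - (μ2 {y : ℝ | y ≤ x}).toReal|

/-- Modified Bessel function of the first kind, of integer order `k`. -/
noncomputable def besselI (k : ℤ) (z : ℝ) : ℝ :=
  ∑' j : ℕ, (z / 2) ^ (2 * j + k.natAbs) /
    ((Nat.factorial j : ℝ) * (Nat.factorial (j + k.natAbs) : ℝ))

namespace Stmt17

noncomputable def term (l : ℝ) (k j : ℕ) : ℝ :=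
  l ^ (2 * j + k) / ((Nat.factorial j : ℝ) * (Nat.factorial (j + k) : ℝ))

noncomputable def Jb (l : ℝ) (k : ℕ) : ℝ := ∑' j, term l k j

lemma term_nonneg {l : ℝ} (hl : 0 < l) (k j : ℕ) : 0 ≤ term l k j := by
  unfold term; positivity

lemma term_pos {l : ℝ} (hl : 0 < l) (k j : ℕ) : 0 < term l k j := by
  unfold term; positivity

lemma summable_term {l : ℝ} (hl : 0 < l) (k : ℕ) : Summable (term l k) := by
  have hg : Summable (fun j => l ^ k * ((l ^ 2) ^ j / (Nat.factorial j : ℝ))) :=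
    (Real.summable_pow_div_factorial (l ^ 2)).mul_left _
  have hle : ∀ j, term l k j ≤ l ^ k * ((l ^ 2) ^ j / (Nat.factorial j : ℝ)) := by
    intro j
    unfold term
    have hfj : (0:ℝ) < (Nat.factorial j : ℝ) := by exact_mod_cast Nat.factorial_pos j
    have hfk : (1:ℝ) ≤ (Nat.factorial (j + k) : ℝ) := by
      exact_mod_cast Nat.one_le_iff_ne_zero.mpr (Nat.factorial_ne_zero _)
    calc l ^ (2 * j + k) / ((Nat.factorial j : ℝ) * (Nat.factorial (j + k) : ℝ))
        ≤ l ^ (2 * j + k) / ((Nat.factorial j : ℝ) * 1) := by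
          gcongr
      _ = l ^ k * ((l ^ 2) ^ j / (Nat.factorial j : ℝ)) := by
          rw [pow_add, pow_mul]; field_simp
  exact Summable.of_nonneg_of_le (fun j => term_nonneg hl k j) hle hg

lemma Jb_pos {l : ℝ} (hl : 0 < l) (k : ℕ) : 0 < Jb l k :=
  Summable.tsum_pos (summable_term hl k) (fun j => term_nonneg hl k j) 0 (term_pos hl k 0)

lemma besselI_eq_Jb (l : ℝ) (k : ℕ) : besselI (k : ℤ) (2 * l) = Jb l k := by
  unfold besselI Jb term
  norm_num

lemma term_identity {l : ℝ} (hl : 0 < l) (k j : ℕ) :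
    term l k (j + 1) = ((k : ℝ) + 1) / l * term l (k + 1) (j + 1) + term l (k + 2) j := by
  unfold term
  have h1 : (2 * (j + 1) + k) = 2 * j + k + 2 := by ring
  have h2 : (2 * (j + 1) + (k + 1)) = 2 * j + k + 3 := by ring
  have h3 : (2 * j + (k + 2)) = 2 * j + k + 2 := by ring
  rw [h1, h2, h3]
  have hj1 : (Nat.factorial (j + 1) : ℝ) = (j + 1) * Nat.factorial j := by
    rw [Nat.factorial_succ]; push_cast; ring
  have hjk1 : ((Nat.factorial (j + 1 + k) : ℝ)) = (Nat.factorial (j + k + 1) : ℝ) := by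
    congr 2; omega
  have hjk2 : (Nat.factorial (j + 1 + (k + 1)) : ℝ) = (j + k + 2) * Nat.factorial (j + k + 1) := by
    have h : j + 1 + (k + 1) = (j + k + 1) + 1 := by omega
    rw [h, Nat.factorial_succ]; push_cast; ring
  have hjk3 : (Nat.factorial (j + (k + 2)) : ℝ) = (j + k + 2) * Nat.factorial (j + k + 1) := by
    have h : j + (k + 2) = (j + k + 1) + 1 := by omega
    rw [h, Nat.factorial_succ]; push_cast; ring
  rw [hj1, hjk1, hjk2, hjk3]
  have hfj : (Nat.factorial j : ℝ) > 0 := by exact_mod_cast Nat.factorial_pos j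
  have hfk : (Nat.factorial (j + k + 1) : ℝ) > 0 := by exact_mod_cast Nat.factorial_pos _
  have hl' : l ≠ 0 := ne_of_gt hl
  field_simp
  ring

lemma term_zero_identity {l : ℝ} (hl : 0 < l) (k : ℕ) :
    term l k 0 = ((k : ℝ) + 1) / l * term l (k + 1) 0 := by
  unfold term
  have h : (Nat.factorial (0 + (k + 1)) : ℝ) = (k + 1) * Nat.factorial (0 + k) := by
    have h2 : 0 + (k + 1) = (0 + k) + 1 := by omega
    rw [h2, Nat.factorial_succ]; push_cast; ring
  rw [h]
  have hfk : (Nat.factorial (0 + k) : ℝ) > 0 := by exact_mod_cast Nat.factorial_pos _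
  have hl' : l ≠ 0 := ne_of_gt hl
  field_simp
  ring

lemma Jb_rec {l : ℝ} (hl : 0 < l) (k : ℕ) :
    Jb l k = ((k : ℝ) + 1) / l * Jb l (k + 1) + Jb l (k + 2) := by
  have h0 : Jb l k = term l k 0 + ∑' j, term l k (j + 1) :=
    Summable.tsum_eq_zero_add (summable_term hl k)
  have h1 : Jb l (k + 1) = term l (k + 1) 0 + ∑' j, term l (k + 1) (j + 1) :=
    Summable.tsum_eq_zero_add (summable_term hl (k + 1))
  have hs1 : Summable (fun j => term l (k + 1) (j + 1)) :=
    (summable_term hl (k + 1)).comp_injective (add_left_injective 1)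
  have hsum : ∑' j, term l k (j + 1)
      = ∑' j, (((k : ℝ) + 1) / l * term l (k + 1) (j + 1) + term l (k + 2) j) := by
    congr 1; funext j; exact term_identity hl k j
  rw [h0, hsum, Summable.tsum_add (hs1.mul_left _) (summable_term hl (k + 2)), tsum_mul_left]
  rw [h1, term_zero_identity hl k]
  unfold Jb
  ring

lemma Jb_succ_le {l : ℝ} (hl : 0 < l) (k : ℕ) :
    Jb l (k + 1) ≤ l / ((k : ℝ) + 1) * Jb l k := by
  unfold Jb
  rw [← tsum_mul_left]
  apply Summable.tsum_le_tsum _ (summable_term hl (k + 1)) ((summable_term hl k).mul_left _)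
  intro j
  unfold term
  have hfj : (0:ℝ) < (Nat.factorial j : ℝ) := by exact_mod_cast Nat.factorial_pos j
  have hfk : (0:ℝ) < (Nat.factorial (j + k) : ℝ) := by exact_mod_cast Nat.factorial_pos _
  have hjk : (Nat.factorial (j + (k + 1)) : ℝ) = ((j:ℝ) + k + 1) * Nat.factorial (j + k) := by
    have h : j + (k + 1) = (j + k) + 1 := by omega
    rw [h, Nat.factorial_succ]; push_cast; ring
  have h2 : (2 * j + (k + 1)) = (2 * j + k) + 1 := by omega
  rw [h2, pow_succ, hjk]
  have hd : ((k:ℝ) + 1) * ((Nat.factorial j : ℝ) * (Nat.factorial (j + k) : ℝ))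
      ≤ (Nat.factorial j : ℝ) * (((j:ℝ) + k + 1) * (Nat.factorial (j + k) : ℝ)) := by
    have hj0 : (0:ℝ) ≤ (j:ℝ) := Nat.cast_nonneg j
    have h1 : ((k:ℝ) + 1) ≤ ((j:ℝ) + k + 1) := by linarith
    nlinarith [mul_le_mul_of_nonneg_right h1 (mul_pos hfj hfk).le]
  calc l ^ (2 * j + k) * l / ((Nat.factorial j : ℝ) * (((j:ℝ) + k + 1) * (Nat.factorial (j + k) : ℝ)))
      ≤ l ^ (2 * j + k) * l / (((k:ℝ) + 1) * ((Nat.factorial j : ℝ) * (Nat.factorial (j + k) : ℝ))) := by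
        gcongr
    _ = l / ((k:ℝ) + 1) * (l ^ (2 * j + k) / ((Nat.factorial j : ℝ) * (Nat.factorial (j + k) : ℝ))) := by
        field_simp


noncomputable def rho (l : ℝ) (k : ℕ) : ℝ := Jb l (k + 1) / Jb l k

noncomputable def gg (l : ℝ) (k : ℕ) : ℝ :=
  2 * l / (Real.sqrt (((k : ℝ) + 1) ^ 2 + 4 * l ^ 2) + ((k : ℝ) + 1))

lemma sqrt_pos' {l : ℝ} (hl : 0 < l) (k : ℕ) :
    0 < Real.sqrt (((k : ℝ) + 1) ^ 2 + 4 * l ^ 2) :=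
  Real.sqrt_pos.mpr (by positivity)

lemma sqrt_sq' {l : ℝ} (hl : 0 < l) (k : ℕ) :
    (Real.sqrt (((k : ℝ) + 1) ^ 2 + 4 * l ^ 2)) ^ 2 = ((k : ℝ) + 1) ^ 2 + 4 * l ^ 2 :=
  Real.sq_sqrt (by positivity)

lemma sqrt_ge {l : ℝ} (hl : 0 < l) (k : ℕ) :
    2 * l ≤ Real.sqrt (((k : ℝ) + 1) ^ 2 + 4 * l ^ 2) := by
  have h : (2 * l) ^ 2 ≤ (((k : ℝ) + 1) ^ 2 + 4 * l ^ 2) := by nlinarith [sq_nonneg ((k:ℝ)+1)]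
  calc 2 * l = Real.sqrt ((2*l)^2) := (Real.sqrt_sq (by positivity)).symm
    _ ≤ _ := Real.sqrt_le_sqrt h

lemma sqrt_le' {l : ℝ} (hl : 0 < l) (k : ℕ) :
    Real.sqrt (((k : ℝ) + 1) ^ 2 + 4 * l ^ 2) ≤ ((k : ℝ) + 1) + 2 * l := by
  have h : (((k : ℝ) + 1) ^ 2 + 4 * l ^ 2) ≤ (((k : ℝ) + 1) + 2 * l) ^ 2 := by
    have : (0:ℝ) ≤ (k:ℝ) := Nat.cast_nonneg k
    nlinarith
  calc Real.sqrt (((k : ℝ) + 1) ^ 2 + 4 * l ^ 2) ≤ Real.sqrt ((((k : ℝ) + 1) + 2 * l) ^ 2) :=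
        Real.sqrt_le_sqrt h
    _ = ((k : ℝ) + 1) + 2 * l := Real.sqrt_sq (by positivity)

lemma gg_pos {l : ℝ} (hl : 0 < l) (k : ℕ) : 0 < gg l k := by
  unfold gg
  have h := sqrt_pos' hl k
  positivity

lemma gg_fix {l : ℝ} (hl : 0 < l) (k : ℕ) :
    gg l k * (((k : ℝ) + 1) / l + gg l k) = 1 := by
  unfold gg
  have hs := sqrt_sq' hl k
  have hsp := sqrt_pos' hl k
  set s := Real.sqrt (((k : ℝ) + 1) ^ 2 + 4 * l ^ 2) with hsdef
  have hden : s + ((k : ℝ) + 1) > 0 := by positivity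
  have hl' : l ≠ 0 := ne_of_gt hl
  field_simp
  nlinarith [hs]

lemma gg_anti {l : ℝ} (hl : 0 < l) (k : ℕ) : gg l (k + 1) ≤ gg l k := by
  unfold gg
  have h1 := sqrt_pos' hl k
  have h2 := sqrt_pos' hl (k + 1)
  have hm : Real.sqrt (((k : ℝ) + 1) ^ 2 + 4 * l ^ 2)
      ≤ Real.sqrt ((((k + 1 : ℕ) : ℝ) + 1) ^ 2 + 4 * l ^ 2) := by
    apply Real.sqrt_le_sqrt; push_cast; nlinarith [Nat.cast_nonneg (α := ℝ) k]
  have hc : ((k : ℝ) + 1) ≤ (((k + 1 : ℕ) : ℝ) + 1) := by push_cast; linarith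
  rw [div_le_div_iff₀ (by positivity) (by positivity)]
  nlinarith

lemma gg_le_u {l : ℝ} (hl : 0 < l) (k : ℕ) : gg l k ≤ 2 * l / (2 * l + ((k : ℝ) + 1)) := by
  unfold gg
  have h := sqrt_ge hl k
  have h1 := sqrt_pos' hl k
  rw [div_le_div_iff₀ (by positivity) (by positivity)]
  nlinarith

lemma gg_lt_one {l : ℝ} (hl : 0 < l) (k : ℕ) : gg l k ≤ 1 := by
  have h := gg_le_u hl k
  have h2 : 2 * l / (2 * l + ((k : ℝ) + 1)) ≤ 1 := by
    rw [div_le_one (by positivity)]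
    have : (0:ℝ) ≤ (k:ℝ) := Nat.cast_nonneg k
    linarith
  linarith

lemma gg_ge {l : ℝ} (hl : 0 < l) (k : ℕ) : l / ((k : ℝ) + 1 + l) ≤ gg l k := by
  unfold gg
  have h := sqrt_le' hl k
  rw [div_le_div_iff₀ (by positivity) (by positivity)]
  nlinarith

lemma gg_alt {l : ℝ} (hl : 0 < l) (j : ℕ) :
    gg l j = (Real.sqrt (((j : ℝ) + 1) ^ 2 + 4 * l ^ 2) - ((j : ℝ) + 1)) / (2 * l) := by
  unfold gg
  have hs := sqrt_sq' hl j
  have hsp := sqrt_pos' hl j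
  set s := Real.sqrt (((j : ℝ) + 1) ^ 2 + 4 * l ^ 2)
  have hden : s + ((j : ℝ) + 1) > 0 := by positivity
  rw [div_eq_div_iff (by positivity) (by positivity)]
  nlinarith [hs]

lemma gg_diff {l : ℝ} (hl : 0 < l) (k : ℕ) : gg l k - gg l (k + 2) ≤ 1 / l := by
  rw [gg_alt hl k, gg_alt hl (k + 2)]
  have hm : Real.sqrt (((k : ℝ) + 1) ^ 2 + 4 * l ^ 2)
      ≤ Real.sqrt ((((k + 2 : ℕ) : ℝ) + 1) ^ 2 + 4 * l ^ 2) := by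
    apply Real.sqrt_le_sqrt; push_cast; nlinarith [Nat.cast_nonneg (α := ℝ) k]
  have hc : (((k + 2 : ℕ) : ℝ) + 1) = ((k : ℝ) + 1) + 2 := by push_cast; ring
  rw [hc] at hm ⊢
  rw [← sub_div, div_le_div_iff₀ (by positivity) (by positivity)]
  nlinarith [mul_le_mul_of_nonneg_right (sub_nonpos.mpr hm) hl.le]

lemma rho_pos {l : ℝ} (hl : 0 < l) (k : ℕ) : 0 < rho l k :=
  div_pos (Jb_pos hl (k + 1)) (Jb_pos hl k)

/-- ρ_k (c_k + ρ_{k+1}) = 1 with c_k = (k+1)/l -/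
lemma rho_rec {l : ℝ} (hl : 0 < l) (k : ℕ) :
    rho l k * (((k : ℝ) + 1) / l + rho l (k + 1)) = 1 := by
  unfold rho
  have h := Jb_rec hl k
  have h0 := Jb_pos hl k
  have h1 := Jb_pos hl (k + 1)
  have h2 := Jb_pos hl (k + 2)
  have hl' : l ≠ 0 := ne_of_gt hl
  have e1 : ((k : ℝ) + 1) / l + Jb l (k + 1 + 1) / Jb l (k + 1)
      = ((((k : ℝ) + 1) * Jb l (k + 1)) + l * Jb l (k + 1 + 1)) / (l * Jb l (k + 1)) := by
    field_simp
  rw [e1, div_mul_div_comm, div_eq_one_iff_eq (by positivity)]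
  have h22 : Jb l (k + 1 + 1) = Jb l (k + 2) := by norm_num
  rw [h22]
  have h' : l * Jb l k = ((k : ℝ) + 1) * Jb l (k + 1) + l * Jb l (k + 2) := by
    rw [h]; field_simp
  linear_combination (- Jb l (k + 1)) * h'

lemma rho_le_base {l : ℝ} (hl : 0 < l) (k : ℕ) (hbase : l ^ 2 ≤ (k : ℝ) + 2) :
    rho l (k + 1) ≤ gg l k := by
  have h1 : rho l (k + 1) ≤ l / ((k : ℝ) + 2) := by
    have := Jb_succ_le hl (k + 1)
    unfold rho
    rw [div_le_iff₀ (Jb_pos hl (k + 1))]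
    push_cast at this ⊢
    calc Jb l (k + 1 + 1) ≤ l / ((k : ℝ) + 1 + 1) * Jb l (k + 1) := this
      _ = l / ((k : ℝ) + 2) * Jb l (k + 1) := by ring_nf
  have h2 : l / ((k : ℝ) + 2) ≤ gg l k := by
    unfold gg
    have hs : Real.sqrt (((k : ℝ) + 1) ^ 2 + 4 * l ^ 2) ≤ (k : ℝ) + 3 := by
      have hsq : (((k : ℝ) + 1) ^ 2 + 4 * l ^ 2) ≤ ((k : ℝ) + 3) ^ 2 := by
        have : (0:ℝ) ≤ (k:ℝ) := Nat.cast_nonneg k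
        nlinarith
      calc Real.sqrt (((k : ℝ) + 1) ^ 2 + 4 * l ^ 2) ≤ Real.sqrt (((k : ℝ) + 3) ^ 2) :=
            Real.sqrt_le_sqrt hsq
        _ = (k : ℝ) + 3 := Real.sqrt_sq (by positivity)
    have hsp := sqrt_pos' hl k
    rw [div_le_div_iff₀ (by positivity) (by positivity)]
    nlinarith
  linarith

/-- If A(k) : ρ_{k+1} ≤ g_k holds then B(k) : g_k ≤ ρ_k. -/
lemma step_B {l : ℝ} (hl : 0 < l) (k : ℕ) (hA : rho l (k + 1) ≤ gg l k) :
    gg l k ≤ rho l k := by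
  have hx := rho_rec hl k
  have hg := gg_fix hl k
  have hx0 := rho_pos hl k
  have hg0 := gg_pos hl k
  have hc0 : (0:ℝ) < ((k:ℝ) + 1) / l := by positivity
  nlinarith [mul_pos hx0 hg0]

/-- A(k+2) implies A(k). -/
lemma step_A {l : ℝ} (hl : 0 < l) (k : ℕ) (hA2 : rho l (k + 2 + 1) ≤ gg l (k + 2)) :
    rho l (k + 1) ≤ gg l k := by
  have hB2 : gg l (k + 2) ≤ rho l (k + 2) := step_B hl (k + 2) hA2
  have hx := rho_rec hl (k + 1)
  push_cast at hx
  have hg := gg_fix hl k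
  have hdiff := gg_diff hl k
  have hx0 := rho_pos hl (k + 1)
  have hr0 := rho_pos hl (k + 2)
  have hg0 := gg_pos hl k
  have hg2 := gg_pos hl (k + 2)
  have hC : (0:ℝ) < ((k:ℝ) + 1 + 1) / l + gg l (k + 2) := by positivity
  have e1 : rho l (k + 1) * (((k:ℝ) + 1 + 1) / l + gg l (k + 2)) ≤ 1 := by
    nlinarith
  have e2 : 1 ≤ gg l k * (((k:ℝ) + 1 + 1) / l + gg l (k + 2)) := by
    have hll : ((k:ℝ) + 1 + 1) / l = ((k:ℝ) + 1) / l + 1 / l := by field_simp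
    rw [hll]
    nlinarith
  nlinarith

lemma A_all {l : ℝ} (hl : 0 < l) (k : ℕ) : rho l (k + 1) ≤ gg l k := by
  have haux : ∀ d k : ℕ, l ^ 2 ≤ (k : ℝ) + 2 + 2 * d → rho l (k + 1) ≤ gg l k := by
    intro d
    induction d with
    | zero =>
        intro k h
        exact rho_le_base hl k (by push_cast at h ⊢; linarith)
    | succ d ih =>
        intro k h
        by_cases hc : l ^ 2 ≤ (k : ℝ) + 2
        · exact rho_le_base hl k hc
        · have h2 : rho l (k + 2 + 1) ≤ gg l (k + 2) := by
            apply ih (k + 2)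
            push_cast at h ⊢
            linarith
          exact step_A hl k h2
  apply haux ⌈l ^ 2⌉₊ k
  have h1 := Nat.le_ceil (l ^ 2)
  have h2 : (0:ℝ) ≤ (k : ℝ) := Nat.cast_nonneg k
  have h3 : (0:ℝ) ≤ (⌈l ^ 2⌉₊ : ℝ) := Nat.cast_nonneg _
  linarith

lemma B_all {l : ℝ} (hl : 0 < l) (k : ℕ) : gg l k ≤ rho l k := step_B hl k (A_all hl k)

lemma rho_succ_le {l : ℝ} (hl : 0 < l) (k : ℕ) : rho l (k + 1) ≤ rho l k :=
  le_trans (A_all hl k) (B_all hl k)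

lemma rho_anti {l : ℝ} (hl : 0 < l) {i j : ℕ} (h : i ≤ j) : rho l j ≤ rho l i := by
  induction j with
  | zero => simp_all
  | succ j ih =>
      rcases Nat.lt_or_ge i (j + 1) with h2 | h2
      · exact le_trans (rho_succ_le hl j) (ih (by omega))
      · have : i = j + 1 := by omega
        rw [this]

lemma rho_le_u {l : ℝ} (hl : 0 < l) (k : ℕ) :
    rho l (k + 1) ≤ 2 * l / (2 * l + ((k : ℝ) + 1)) :=
  le_trans (A_all hl k) (gg_le_u hl k)

lemma rho_le_one {l : ℝ} (hl : 0 < l) (k : ℕ) : rho l (k + 1) ≤ 1 :=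
  le_trans (A_all hl k) (gg_lt_one hl k)

lemma rho_lb {l : ℝ} (hl : 0 < l) (k : ℕ) : l / ((k : ℝ) + 1 + l) ≤ rho l k :=
  le_trans (gg_ge hl k) (B_all hl k)

lemma Jb_div_eq_prod {l : ℝ} (hl : 0 < l) {a b : ℕ} (h : a ≤ b) :
    Jb l b / Jb l a = ∏ i ∈ Finset.Ico a b, rho l i := by
  induction b, h using Nat.le_induction with
  | base => rw [Finset.Ico_self, Finset.prod_empty, div_self (ne_of_gt (Jb_pos hl a))]
  | succ b hab ih =>
      rw [Finset.prod_Ico_succ_top hab, ← ih]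
      unfold rho
      have ha' : Jb l a ≠ 0 := ne_of_gt (Jb_pos hl a)
      have hb' : Jb l b ≠ 0 := ne_of_gt (Jb_pos hl b)
      field_simp

lemma u_mul_u_le {l : ℝ} (hl : 0 < l) (m x y : ℕ) (hxy : m ≤ x + y) :
    2 * l / (2 * l + (x:ℝ)) * (2 * l / (2 * l + (y:ℝ))) ≤ 2 * l / (2 * l + (m:ℝ)) := by
  have hx0 : (0:ℝ) ≤ (x:ℝ) := Nat.cast_nonneg x
  have hy0 : (0:ℝ) ≤ (y:ℝ) := Nat.cast_nonneg y
  have hm : ((m:ℝ)) ≤ (x:ℝ) + (y:ℝ) := by exact_mod_cast hxy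
  rw [div_mul_div_comm, div_le_div_iff₀ (by positivity) (by positivity)]
  nlinarith [mul_nonneg hx0 hy0]

lemma pair_le {l : ℝ} (hl : 0 < l) (m : ℕ) {x y : ℕ} (hx : 1 ≤ x) (hy : 1 ≤ y)
    (hxy : m ≤ x + y) : rho l x * rho l y ≤ 2 * l / (2 * l + (m:ℝ)) := by
  obtain ⟨x', rfl⟩ : ∃ x', x = x' + 1 := ⟨x - 1, by omega⟩
  obtain ⟨y', rfl⟩ : ∃ y', y = y' + 1 := ⟨y - 1, by omega⟩
  have h1 := rho_le_u hl x'
  have h2 := rho_le_u hl y'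
  have p1 := rho_pos hl (x' + 1)
  have p2 := rho_pos hl (y' + 1)
  calc rho l (x' + 1) * rho l (y' + 1)
      ≤ (2 * l / (2 * l + ((x':ℝ) + 1))) * (2 * l / (2 * l + ((y':ℝ) + 1))) := by
        apply mul_le_mul h1 h2 p2.le (by positivity)
    _ ≤ 2 * l / (2 * l + (m:ℝ)) := by
        have := u_mul_u_le hl m (x' + 1) (y' + 1) (by omega)
        push_cast at this ⊢
        linarith

lemma prod_rho_le {l : ℝ} (hl : 0 < l) (m : ℕ) (a s : ℕ) (ha : 1 ≤ a)
    (hm : m + 1 ≤ 2 * a + 2 * s) :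
    ∏ i ∈ Finset.range (2 * s), rho l (a + i) ≤ (2 * l / (2 * l + (m:ℝ))) ^ s := by
  rw [two_mul, Finset.prod_range_add]
  rw [← Finset.prod_range_reflect (fun i => rho l (a + (s + i))) s]
  rw [← Finset.prod_mul_distrib]
  calc ∏ i ∈ Finset.range s, (rho l (a + i) * rho l (a + (s + (s - 1 - i))))
      ≤ ∏ _i ∈ Finset.range s, (2 * l / (2 * l + (m:ℝ))) := by
        apply Finset.prod_le_prod
        · intro i _
          exact (mul_pos (rho_pos hl _) (rho_pos hl _)).le
        · intro i hi
          rw [Finset.mem_range] at hi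
          apply pair_le hl m (by omega) (by omega) (by omega)
    _ = (2 * l / (2 * l + (m:ℝ))) ^ s := by rw [Finset.prod_const, Finset.card_range]

lemma geom_bound {l : ℝ} (hl : 0 < l) (m : ℕ) (hm : 1 ≤ m) (N : ℕ) :
    ∑ s ∈ Finset.range N, (2 * l / (2 * l + (m:ℝ))) ^ s ≤ (2 * l + (m:ℝ)) / m := by
  set w : ℝ := 2 * l / (2 * l + (m:ℝ)) with hw
  have hm0 : (0:ℝ) < (m:ℝ) := by exact_mod_cast hm
  have hw0 : 0 ≤ w := by positivity
  have hw1 : w < 1 := by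
    rw [hw, div_lt_one (by positivity)]; linarith
  have hgs := geom_sum_mul w N
  have hwN : (0:ℝ) ≤ w ^ N := pow_nonneg hw0 N
  have hsum : (∑ s ∈ Finset.range N, w ^ s) * (1 - w) ≤ 1 := by nlinarith
  have h1w : 1 - w = (m:ℝ) / (2 * l + (m:ℝ)) := by
    rw [hw]; field_simp; ring
  rw [h1w] at hsum
  rw [le_div_iff₀ hm0]
  have h2 : (0:ℝ) < 2 * l + (m:ℝ) := by positivity
  have h3 := mul_le_mul_of_nonneg_right hsum h2.le
  rw [mul_assoc, div_mul_cancel₀ _ (ne_of_gt h2)] at h3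
  linarith

lemma Jb_even_chain {l : ℝ} (hl : 0 < l) (a t : ℕ) : Jb l (a + 2 * t) ≤ Jb l a := by
  induction t with
  | zero => simp
  | succ t ih =>
      have hrec := Jb_rec hl (a + 2 * t)
      have hpos : 0 ≤ ((a + 2 * t : ℕ) : ℝ) + 1 := by positivity
      have h1 := Jb_pos hl (a + 2 * t + 1)
      have h2 : Jb l (a + 2 * t + 2) ≤ Jb l (a + 2 * t) := by
        have hnn : 0 ≤ (((a + 2 * t : ℕ) : ℝ) + 1) / l * Jb l (a + 2 * t + 1) := by positivity
        linarith
      calc Jb l (a + 2 * (t + 1)) = Jb l (a + 2 * t + 2) := by ring_nf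
        _ ≤ Jb l (a + 2 * t) := h2
        _ ≤ Jb l a := ih

lemma div_mono_denom {a b c : ℝ} (ha : 0 ≤ a) (hc : 0 < c) (h : c ≤ b) : a / b ≤ a / c := by
  have hb : 0 < b := lt_of_lt_of_le hc h
  rw [div_le_div_iff₀ hb hc]
  nlinarith

lemma Jb_adj {l : ℝ} (hl : 0 < l) (k : ℕ) : Jb l (k + 2) ≤ Jb l (k + 1) := by
  have h := rho_le_one hl k
  unfold rho at h
  have hp := Jb_pos hl (k + 1)
  rw [div_le_one hp] at h
  have e : k + 1 + 1 = k + 2 := by omega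
  rwa [e] at h

lemma Jb_top_id {l : ℝ} (hl : 0 < l) (m c : ℕ) :
    Jb l (m + 1) / Jb l c = rho l m * (Jb l m / Jb l c) := by
  unfold rho
  have h1 : Jb l m ≠ 0 := ne_of_gt (Jb_pos hl m)
  have h2 : Jb l c ≠ 0 := ne_of_gt (Jb_pos hl c)
  field_simp

lemma Jb_bot_id {l : ℝ} (hl : 0 < l) (m b : ℕ) :
    Jb l m / Jb l b = rho l b * (Jb l m / Jb l (b + 1)) := by
  unfold rho
  have h1 : Jb l b ≠ 0 := ne_of_gt (Jb_pos hl b)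
  have h2 : Jb l (b + 1) ≠ 0 := ne_of_gt (Jb_pos hl (b + 1))
  field_simp

/-- `I_m / I_b ≤ w ^ s` when `m - b = 2 s` (and `m + 1 ≤ 2 b + 2 s`). -/
lemma frac_le_pow {l : ℝ} (hl : 0 < l) {m b s : ℕ} (hb1 : 1 ≤ b) (hbm : b ≤ m)
    (hcount : m - b = 2 * s) (hcond : m + 1 ≤ 2 * b + 2 * s) :
    Jb l m / Jb l b ≤ (2 * l / (2 * l + (m : ℝ))) ^ s := by
  rw [Jb_div_eq_prod hl hbm, Finset.prod_Ico_eq_prod_range, hcount]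
  exact prod_rho_le hl m b s hb1 hcond

lemma final_bound {l : ℝ} (hl : 0 < l) {m : ℕ} (hm2 : 2 ≤ m) (N : ℕ) :
    (1 - rho l m) * ∑ s ∈ Finset.range N, (2 * l / (2 * l + (m : ℝ))) ^ s ≤ 3 := by
  have hmR : (2:ℝ) ≤ (m:ℝ) := by exact_mod_cast hm2
  have hd : (0:ℝ) < (m:ℝ) := by linarith
  have hd2 : (0:ℝ) < (m:ℝ) + 1 + l := by linarith
  have hρub : rho l m ≤ 1 := by
    have h := rho_le_one hl (m - 1)
    have e : m - 1 + 1 = m := by omega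
    rwa [e] at h
  have hρlb := rho_lb hl m
  have hS := geom_bound hl m (by omega) N
  have hSnn : 0 ≤ ∑ s ∈ Finset.range N, (2 * l / (2 * l + (m : ℝ))) ^ s :=
    Finset.sum_nonneg fun s _ => pow_nonneg (by positivity) s
  have e1 : 1 - rho l m ≤ ((m:ℝ) + 1) / ((m:ℝ) + 1 + l) := by
    rw [le_div_iff₀ hd2]
    have h2 := mul_le_mul_of_nonneg_right hρlb hd2.le
    rw [div_mul_cancel₀ _ (ne_of_gt hd2)] at h2
    nlinarith
  calc (1 - rho l m) * ∑ s ∈ Finset.range N, (2 * l / (2 * l + (m : ℝ))) ^ s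
      ≤ (1 - rho l m) * ((2 * l + (m:ℝ)) / m) :=
        mul_le_mul_of_nonneg_left hS (by linarith)
    _ ≤ (((m:ℝ) + 1) / ((m:ℝ) + 1 + l)) * ((2 * l + (m:ℝ)) / m) := by
        apply mul_le_mul_of_nonneg_right e1 (by positivity)
    _ ≤ 3 := by
        rw [div_mul_div_comm, div_le_iff₀ (by positivity)]
        nlinarith [mul_nonneg hl.le (sub_nonneg.mpr hmR)]

end Stmt17

open Stmt17 in
/-- For `λ > 0` and every positive integer `m`,
`|Σ_{n odd, 1 ≤ n ≤ m−1} (I_{m+1}/I_{n+2} − I_m/I_{n−1})| ≤ 3`, where `I_k = I_k(2λ)`. -/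
theorem stmt_17 (l : ℝ) (hl : 0 < l) (m : ℕ) (hm : 0 < m) :
    |∑ n ∈ (Finset.Icc 1 (m - 1)).filter (fun n => Odd n),
        (besselI ((m : ℤ) + 1) (2 * l) / besselI ((n : ℤ) + 2) (2 * l)
          - besselI (m : ℤ) (2 * l) / besselI ((n : ℤ) - 1) (2 * l))| ≤ 3 := by
  classical
  obtain ⟨J, hJdef⟩ : ∃ J : ℕ, J = m / 2 := ⟨_, rfl⟩
  have hset : (Finset.Icc 1 (m - 1)).filter (fun n => Odd n)
      = (Finset.range J).image (fun t => 2 * t + 1) := by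
    ext n
    simp only [Finset.mem_filter, Finset.mem_Icc, Finset.mem_image, Finset.mem_range,
      Nat.odd_iff]
    constructor
    · rintro ⟨⟨h1, h2⟩, h3⟩
      refine ⟨n / 2, by omega, by omega⟩
    · rintro ⟨t, ht, rfl⟩
      omega
  rw [hset, Finset.sum_image (by intro a _ b _ h; have h' : 2 * a + 1 = 2 * b + 1 := h; omega)]
  have hsummand : ∀ t ∈ Finset.range J,
      (besselI ((m : ℤ) + 1) (2 * l) / besselI (((2 * t + 1 : ℕ) : ℤ) + 2) (2 * l)
        - besselI (m : ℤ) (2 * l) / besselI (((2 * t + 1 : ℕ) : ℤ) - 1) (2 * l))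
      = Jb l (m + 1) / Jb l (2 * t + 3) - Jb l m / Jb l (2 * t) := by
    intro t _
    have e1 : ((m : ℤ) + 1) = ((m + 1 : ℕ) : ℤ) := by push_cast; ring
    have e2 : (((2 * t + 1 : ℕ) : ℤ) + 2) = ((2 * t + 3 : ℕ) : ℤ) := by push_cast; ring
    have e3 : (((2 * t + 1 : ℕ) : ℤ) - 1) = ((2 * t : ℕ) : ℤ) := by push_cast; ring
    rw [e1, e2, e3]
    simp only [besselI_eq_Jb]
  rw [Finset.sum_congr rfl hsummand]
  rcases Nat.eq_zero_or_pos J with hJ0 | hJ1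
  · rw [hJ0]
    simp
  have hm2 : 2 ≤ m := by omega
  have hpos : ∀ k, (0:ℝ) < Jb l k := Jb_pos hl
  -- termwise split
  have hsplit : ∀ t ∈ Finset.range J,
      Jb l (m + 1) / Jb l (2 * t + 3) - Jb l m / Jb l (2 * t)
      = (Jb l (m + 1) / Jb l (2 * t + 3) - Jb l m / Jb l (2 * t + 2))
        + ((fun t => Jb l m / Jb l (2 * t)) (t + 1) - (fun t => Jb l m / Jb l (2 * t)) t) := by
    intro t _
    simp only
    have e : Jb l (2 * (t + 1)) = Jb l (2 * t + 2) := by congr 1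
    rw [e]
    ring
  rw [Finset.sum_congr rfl hsplit, Finset.sum_add_distrib,
    Finset.sum_range_sub (fun t => Jb l m / Jb l (2 * t)) J]
  rw [abs_le]
  have htele_nonneg : 0 ≤ Jb l m / Jb l (2 * J) - Jb l m / Jb l (2 * 0) := by
    have hc := Jb_even_chain hl 0 J
    rw [zero_add] at hc
    have := div_mono_denom (le_of_lt (hpos m)) (hpos (2 * J)) (by simpa using hc)
    simpa using this
  have htele_le_one : Jb l m / Jb l (2 * J) ≤ 1 := by
    rcases Nat.even_or_odd m with he | ho
    · have h2J : 2 * J = m := by rcases he with ⟨r, hr⟩; omega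
      rw [h2J, div_self (ne_of_gt (hpos m))]
    · have h2J : m = 2 * J + 1 := by
        rcases ho with ⟨r, hr⟩
        omega
      have h := rho_le_one hl (2 * J - 1)
      have e : 2 * J - 1 + 1 = 2 * J := by omega
      rw [e] at h
      unfold rho at h
      calc Jb l m / Jb l (2 * J) = Jb l (2 * J + 1) / Jb l (2 * J) := by rw [← h2J]
        _ ≤ 1 := h
  constructor
  · -- lower bound : -3 ≤ sum
    have hρub : rho l m ≤ 1 := by
      have h := rho_le_one hl (m - 1)
      rwa [show m - 1 + 1 = m from by omega] at h
    have hρnn : (0:ℝ) ≤ 1 - rho l m := by linarith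
    have hDle_gen : ∀ t : ℕ, Jb l m / Jb l (2 * t + 2) - Jb l (m + 1) / Jb l (2 * t + 3)
        ≤ (1 - rho l m) * (Jb l m / Jb l (2 * t + 3)) := by
      intro t
      have hid1 := Jb_top_id hl m (2 * t + 3)
      have hid2 := Jb_bot_id hl m (2 * t + 2)
      rw [show 2 * t + 2 + 1 = 2 * t + 3 from by omega] at hid2
      have hr1 : rho l (2 * t + 2) ≤ 1 := by
        have h := rho_le_one hl (2 * t + 1)
        rwa [show 2 * t + 1 + 1 = 2 * t + 2 from by omega] at h
      have hX : 0 < Jb l m / Jb l (2 * t + 3) := div_pos (hpos m) (hpos _)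
      rw [hid1, hid2]
      nlinarith
    have hkey : ∑ t ∈ Finset.range J,
        (Jb l m / Jb l (2 * t + 2) - Jb l (m + 1) / Jb l (2 * t + 3)) ≤ 3 := by
      rcases Nat.even_or_odd m with he | ho
      · -- m even : m = 2 J, last term vanishes
        obtain ⟨r, hr⟩ := he
        have hJm : m = 2 * J := by omega
        rw [show J = (J - 1) + 1 from by omega, Finset.sum_range_succ]
        have elast : Jb l m / Jb l (2 * (J - 1) + 2) - Jb l (m + 1) / Jb l (2 * (J - 1) + 3)
            = 0 := by
          rw [show Jb l (2 * (J - 1) + 2) = Jb l m from by congr 1; omega,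
              show Jb l (2 * (J - 1) + 3) = Jb l (m + 1) from by congr 1; omega,
              div_self (ne_of_gt (hpos m)), div_self (ne_of_gt (hpos (m + 1)))]
          ring
        rw [elast, add_zero]
        calc ∑ t ∈ Finset.range (J - 1),
              (Jb l m / Jb l (2 * t + 2) - Jb l (m + 1) / Jb l (2 * t + 3))
            ≤ ∑ t ∈ Finset.range (J - 1),
              ((1 - rho l m) * (2 * l / (2 * l + (m : ℝ))) ^ (J - 1 - 1 - t)) := by
              apply Finset.sum_le_sum
              intro t ht
              rw [Finset.mem_range] at ht
              have step1 := hDle_gen t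
              have step2 : Jb l m / Jb l (2 * t + 3) ≤ Jb l m / Jb l (2 * t + 4) := by
                apply div_mono_denom (hpos m).le (hpos (2 * t + 4))
                have h := Jb_adj hl (2 * t + 2)
                rwa [show 2 * t + 2 + 2 = 2 * t + 4 from by omega,
                  show 2 * t + 2 + 1 = 2 * t + 3 from by omega] at h
              have step3 : Jb l m / Jb l (2 * t + 4)
                  ≤ (2 * l / (2 * l + (m : ℝ))) ^ (J - 1 - 1 - t) :=
                frac_le_pow hl (b := 2 * t + 4) (s := J - 1 - 1 - t)
                  (by omega) (by omega) (by omega) (by omega)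
              calc Jb l m / Jb l (2 * t + 2) - Jb l (m + 1) / Jb l (2 * t + 3)
                  ≤ (1 - rho l m) * (Jb l m / Jb l (2 * t + 3)) := step1
                _ ≤ (1 - rho l m) * (Jb l m / Jb l (2 * t + 4)) :=
                    mul_le_mul_of_nonneg_left step2 hρnn
                _ ≤ (1 - rho l m) * (2 * l / (2 * l + (m : ℝ))) ^ (J - 1 - 1 - t) :=
                    mul_le_mul_of_nonneg_left step3 hρnn
          _ = (1 - rho l m) * ∑ t ∈ Finset.range (J - 1),
                (2 * l / (2 * l + (m : ℝ))) ^ (J - 1 - 1 - t) := by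
              rw [Finset.mul_sum]
          _ = (1 - rho l m) * ∑ s ∈ Finset.range (J - 1),
                (2 * l / (2 * l + (m : ℝ))) ^ s := by
              rw [Finset.sum_range_reflect (fun s => (2 * l / (2 * l + (m : ℝ))) ^ s) (J - 1)]
          _ ≤ 3 := final_bound hl hm2 (J - 1)
      · -- m odd : m = 2 J + 1
        obtain ⟨r, hr⟩ := ho
        have hJm : m = 2 * J + 1 := by omega
        calc ∑ t ∈ Finset.range J,
              (Jb l m / Jb l (2 * t + 2) - Jb l (m + 1) / Jb l (2 * t + 3))
            ≤ ∑ t ∈ Finset.range J,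
              ((1 - rho l m) * (2 * l / (2 * l + (m : ℝ))) ^ (J - 1 - t)) := by
              apply Finset.sum_le_sum
              intro t ht
              rw [Finset.mem_range] at ht
              have step1 := hDle_gen t
              have step3 : Jb l m / Jb l (2 * t + 3)
                  ≤ (2 * l / (2 * l + (m : ℝ))) ^ (J - 1 - t) :=
                frac_le_pow hl (b := 2 * t + 3) (s := J - 1 - t)
                  (by omega) (by omega) (by omega) (by omega)
              calc Jb l m / Jb l (2 * t + 2) - Jb l (m + 1) / Jb l (2 * t + 3)
                  ≤ (1 - rho l m) * (Jb l m / Jb l (2 * t + 3)) := step1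
                _ ≤ (1 - rho l m) * (2 * l / (2 * l + (m : ℝ))) ^ (J - 1 - t) :=
                    mul_le_mul_of_nonneg_left step3 hρnn
          _ = (1 - rho l m) * ∑ t ∈ Finset.range J,
                (2 * l / (2 * l + (m : ℝ))) ^ (J - 1 - t) := by
              rw [Finset.mul_sum]
          _ = (1 - rho l m) * ∑ s ∈ Finset.range J,
                (2 * l / (2 * l + (m : ℝ))) ^ s := by
              rw [Finset.sum_range_reflect (fun s => (2 * l / (2 * l + (m : ℝ))) ^ s) J]
          _ ≤ 3 := final_bound hl hm2 J
    have : -(∑ t ∈ Finset.range J,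
        (Jb l m / Jb l (2 * t + 2) - Jb l (m + 1) / Jb l (2 * t + 3)))
        ≤ ∑ t ∈ Finset.range J,
          (Jb l (m + 1) / Jb l (2 * t + 3) - Jb l m / Jb l (2 * t + 2)) := by
      rw [← Finset.sum_neg_distrib]
      apply le_of_eq
      apply Finset.sum_congr rfl
      intro t _
      ring
    linarith
  · -- upper bound : sum ≤ 3
    have hterm : ∀ t ∈ Finset.range J,
        Jb l (m + 1) / Jb l (2 * t + 3) - Jb l m / Jb l (2 * t + 2) ≤ 0 := by
      intro t ht
      rw [Finset.mem_range] at ht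
      have hX : 0 < Jb l m / Jb l (2 * t + 3) := div_pos (hpos m) (hpos _)
      have hid1 := Jb_top_id hl m (2 * t + 3)
      have hid2 := Jb_bot_id hl m (2 * t + 2)
      have e : 2 * t + 2 + 1 = 2 * t + 3 := by omega
      rw [e] at hid2
      rw [hid1, hid2]
      have hmono : rho l m ≤ rho l (2 * t + 2) := rho_anti hl (by omega)
      nlinarith
    have h1 : ∑ t ∈ Finset.range J,
        (Jb l (m + 1) / Jb l (2 * t + 3) - Jb l m / Jb l (2 * t + 2)) ≤ 0 :=
      Finset.sum_nonpos hterm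
    have hdiv0 : 0 < Jb l m / Jb l (2 * 0) := div_pos (hpos m) (hpos _)
    linarith
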